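/- Let T₁, T₂ be labeled trees. For nodes u ∈ T₁ and v ∈ T₂, MAST satisfies the recurrence: mast(T₁^u, T₂^v) = max over: (a) max_{x ∈ C(v)} mast(T₁^u, T₂^x); (b) max_{x ∈ C(u)} mast(T₁^x, T₂^v); (c) the weight of a maximum weight matching of the bipartite graph G_{uv} between C(u) and C(v) with edge (x,y) weighted mast(T₁^x, T₂^y), plus 1 if u and v are labeled with the same symbol (and plus 0 if both are unlabeled; option (c) is unavailable if u,v have different labels or exactly one is labeled). -/

import Mathlib

open Finset

/-- A finite rooted tree on vertex set `V`, given by its root and parent function. -/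
structure RTree (V : Type*) where
  root : V
  parent : V → V
  parent_root : parent root = root
  reaches_root : ∀ v, ∃ n, parent^[n] v = root

variable {V₁ V₂ L : Type*} [Fintype V₁] [DecidableEq V₁] [Fintype V₂] [DecidableEq V₂]

open scoped Classical in
/-- The set of children of `u`. -/
noncomputable def RTree.children {V : Type*} [Fintype V] [DecidableEq V]
    (T : RTree V) (u : V) : Finset V :=
  Finset.univ.filter fun v => T.parent v = u ∧ v ≠ u

open scoped Classical in
/-- The subtree rooted at `u`. -/
noncomputable def RTree.subtree {V : Type*} [Fintype V] [DecidableEq V]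
    (T : RTree V) (u : V) : Finset V :=
  Finset.univ.filter fun v => ∃ k, T.parent^[k] v = u

/-- `a` is an ancestor of `b` (possibly `a = b`). -/
def RTree.anc {V : Type*} (T : RTree V) (a b : V) : Prop := ∃ k, T.parent^[k] b = a

/-- `c` is the least common ancestor of `a` and `b`. -/
def RTree.IsLCA {V : Type*} (T : RTree V) (c a b : V) : Prop :=
  T.anc c a ∧ T.anc c b ∧ ∀ c', T.anc c' a → T.anc c' b → T.anc c' c

namespace RTree
variable {V : Type*} [Fintype V] [DecidableEq V] (T : RTree V)

lemma anc_refl (a : V) : T.anc a a := ⟨0, rfl⟩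

lemma anc_trans {a b c : V} (h1 : T.anc a b) (h2 : T.anc b c) : T.anc a c := by
  obtain ⟨k, hk⟩ := h1; obtain ⟨j, hj⟩ := h2
  exact ⟨k + j, by rw [Function.iterate_add_apply, hj, hk]⟩

lemma iterate_root (n : ℕ) : T.parent^[n] T.root = T.root := by
  induction n with
  | zero => rfl
  | succ n ih => rw [Function.iterate_succ_apply, T.parent_root, ih]

lemma eq_root_of_cycle {a : V} {c : ℕ} (hc : 0 < c) (h : T.parent^[c] a = a) : a = T.root := by
  obtain ⟨n, hn⟩ := T.reaches_root a
  have hcn : ∀ t, T.parent^[c * t] a = a := by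
    intro t; induction t with
    | zero => rfl
    | succ t ih => rw [Nat.mul_succ, Function.iterate_add_apply, h, ih]
  have h1 : T.parent^[c * n] a = a := hcn n
  have h2 : c * n ≥ n := Nat.le_mul_of_pos_left n hc
  have : T.parent^[c * n] a = T.root := by
    rw [show c * n = (c * n - n) + n from (Nat.sub_add_cancel h2).symm,
      Function.iterate_add_apply, hn, iterate_root]
  rw [← h1, this]

lemma anc_antisymm {a b : V} (h1 : T.anc a b) (h2 : T.anc b a) : a = b := by
  obtain ⟨k, hk⟩ := h1; obtain ⟨j, hj⟩ := h2
  rcases Nat.eq_zero_or_pos (k + j) with h | h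
  · obtain ⟨rfl, rfl⟩ : k = 0 ∧ j = 0 := by omega
    rw [← hk]; rfl
  · have hc : T.parent^[k + j] a = a := by rw [Function.iterate_add_apply, hj, hk]
    have ha := T.eq_root_of_cycle h hc
    have hc' : T.parent^[j + k] b = b := by rw [Function.iterate_add_apply, hk, hj]
    have hb := T.eq_root_of_cycle (by omega) hc'
    rw [ha, hb]

/-- ancestors of a fixed node form a chain -/
lemma anc_total {a c c' : V} (h1 : T.anc c a) (h2 : T.anc c' a) :
    T.anc c c' ∨ T.anc c' c := by
  obtain ⟨k, hk⟩ := h1; obtain ⟨j, hj⟩ := h2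
  rcases le_total k j with h | h
  · right; exact ⟨j - k, by rw [← hk, ← Function.iterate_add_apply, Nat.sub_add_cancel h, hj]⟩
  · left; exact ⟨k - j, by rw [← hj, ← Function.iterate_add_apply, Nat.sub_add_cancel h, hk]⟩

lemma anc_root (a : V) : T.anc T.root a := T.reaches_root a

open scoped Classical in
lemma lca_exists (a b : V) : ∃ c, T.IsLCA c a b := by
  have hex : ∃ k, T.anc (T.parent^[k] a) b := by
    obtain ⟨n, hn⟩ := T.reaches_root a
    exact ⟨n, hn ▸ T.anc_root b⟩
  classical
  let k := Nat.find hex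
  refine ⟨T.parent^[k] a, ⟨k, rfl⟩, Nat.find_spec hex, ?_⟩
  rintro c' ⟨j, hj⟩ hcb
  have hjk : k ≤ j := Nat.find_le (hj ▸ hcb)
  exact ⟨j - k, by rw [← Function.iterate_add_apply, Nat.sub_add_cancel hjk, hj]⟩

lemma lca_unique {c c' a b : V} (h : T.IsLCA c a b) (h' : T.IsLCA c' a b) : c = c' :=
  T.anc_antisymm (h'.2.2 c h.1 h.2.1) (h.2.2 c' h'.1 h'.2.1)

lemma isLCA_self_left {a b : V} (h : T.anc a b) : T.IsLCA a a b :=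
  ⟨T.anc_refl a, h, fun _ hc _ => hc⟩

lemma isLCA_self_right {a b : V} (h : T.anc b a) : T.IsLCA b a b :=
  ⟨h, T.anc_refl b, fun _ _ hc => hc⟩



lemma mem_subtree {u a : V} : a ∈ T.subtree u ↔ T.anc u a := by
  simp [subtree, anc]

lemma mem_children {u x : V} : x ∈ T.children u ↔ T.parent x = u ∧ x ≠ u := by
  simp [children]

lemma mem_subtree_self (u : V) : u ∈ T.subtree u := T.mem_subtree.2 (T.anc_refl u)

lemma anc_of_child {u x : V} (hx : x ∈ T.children u) : T.anc u x :=
  ⟨1, (T.mem_children.1 hx).1⟩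

lemma subtree_child_subset {u x : V} (hx : x ∈ T.children u) :
    T.subtree x ⊆ T.subtree u := fun a ha =>
  T.mem_subtree.2 (T.anc_trans (T.anc_of_child hx) (T.mem_subtree.1 ha))

lemma not_mem_subtree_child {u x : V} (hx : x ∈ T.children u) : u ∉ T.subtree x := by
  intro h
  exact (T.mem_children.1 hx).2
    (T.anc_antisymm (T.mem_subtree.1 h) (T.anc_of_child hx))

/-- every strict descendant of `u` lies in the subtree of a child -/
lemma exists_child_subtree {u a : V} (ha : a ∈ T.subtree u) (hne : a ≠ u) :
    ∃ x ∈ T.children u, a ∈ T.subtree x := by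
  obtain ⟨k, hk⟩ := T.mem_subtree.1 ha
  clear ha
  induction k generalizing a with
  | zero => exact absurd hk hne
  | succ k ih =>
    rw [Function.iterate_succ_apply] at hk
    by_cases hp : T.parent a = u
    · exact ⟨a, T.mem_children.2 ⟨hp, hne⟩, T.mem_subtree_self a⟩
    · obtain ⟨x, hx, hmem⟩ := ih hp hk
      obtain ⟨j, hj⟩ := T.mem_subtree.1 hmem
      exact ⟨x, hx, T.mem_subtree.2 ⟨j + 1, by
        rw [Function.iterate_add_apply]; exact hj⟩⟩

lemma disjoint_child_subtrees {u x x' : V} (hx : x ∈ T.children u) (hx' : x' ∈ T.children u)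
    (hne : x ≠ x') : Disjoint (T.subtree x) (T.subtree x') := by
  rw [Finset.disjoint_left]
  intro a ha ha'
  have key : ∀ y y' : V, y ∈ T.children u → y' ∈ T.children u → T.anc y y' → y = y' := by
    intro y y' hy hy' hanc
    obtain ⟨k, hk⟩ := hanc
    rcases Nat.eq_zero_or_pos k with h0 | h0
    · subst h0; exact hk.symm
    · have hk' : k - 1 + 1 = k := by omega
      have hyu : T.anc y u := ⟨k - 1, by
        calc T.parent^[k-1] u = T.parent^[k-1] (T.parent y') := by
              rw [(T.mem_children.1 hy').1]
          _ = T.parent^[k-1+1] y' := (Function.iterate_succ_apply _ _ _).symm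
          _ = y := by rw [hk']; exact hk⟩
      exact absurd (T.anc_antisymm hyu (T.anc_of_child hy)) (T.mem_children.1 hy).2
  rcases T.anc_total (T.mem_subtree.1 ha) (T.mem_subtree.1 ha') with h | h
  · exact hne (key x x' hx hx' h)
  · exact hne (key x' x hx' hx h).symm

/-- if `a` is in subtree of child `x` and `c` is an ancestor of `a` inside subtree `u`
other than `u`, then `c ∈ subtree x`. Key chain fact. -/
lemma anc_in_child {u x a c : V} (hx : x ∈ T.children u) (ha : a ∈ T.subtree x)
    (hc : T.anc c a) (hcu : c ∈ T.subtree u) (hne : c ≠ u) : c ∈ T.subtree x := by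
  obtain ⟨x', hx', hcx'⟩ := T.exists_child_subtree hcu hne
  have hax' : a ∈ T.subtree x' :=
    T.mem_subtree.2 (T.anc_trans (T.mem_subtree.1 hcx') hc)
  by_cases h : x = x'
  · exact h ▸ hcx'
  · exact absurd hax' (Finset.disjoint_left.1 (T.disjoint_child_subtrees hx hx' h) ha)

/-- LCA of two nodes of different child subtrees is `u` itself -/
lemma isLCA_of_ne_children {u x x' a b : V} (hx : x ∈ T.children u) (hx' : x' ∈ T.children u)
    (hne : x ≠ x') (ha : a ∈ T.subtree x) (hb : b ∈ T.subtree x') : T.IsLCA u a b := by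
  have hua : T.anc u a := T.mem_subtree.1 (T.subtree_child_subset hx ha)
  have hub : T.anc u b := T.mem_subtree.1 (T.subtree_child_subset hx' hb)
  refine ⟨hua, hub, fun c hca hcb => ?_⟩
  rcases T.anc_total hca hua with h | h
  ·
    exact h
  · -- anc u c: c ∈ subtree u
    by_cases hcu : c = u
    · exact hcu ▸ T.anc_refl u
    · have hcs : c ∈ T.subtree x := T.anc_in_child hx ha hca (T.mem_subtree.2 h) hcu
      have hcs' : c ∈ T.subtree x' := T.anc_in_child hx' hb hcb (T.mem_subtree.2 h) hcu
      exact absurd hcs' (Finset.disjoint_left.1 (T.disjoint_child_subtrees hx hx' hne) hcs)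

/-- LCA of two nodes inside subtree x is in subtree x -/
lemma lca_mem_subtree {x a b c : V} (ha : a ∈ T.subtree x) (hb : b ∈ T.subtree x)
    (h : T.IsLCA c a b) : c ∈ T.subtree x :=
  T.mem_subtree.2 (h.2.2 x (T.mem_subtree.1 ha) (T.mem_subtree.1 hb))


end RTree


/-- `M` encodes an agreement subtree of `T₁` and `T₂` (a label-preserving homeomorphic
common subtree): a partial one-to-one correspondence between nodes of `T₁` and `T₂`
preserving labels and least common ancestors in both directions. -/
def AgreementPairs (T₁ : RTree V₁) (T₂ : RTree V₂)
    (lab₁ : V₁ → Option L) (lab₂ : V₂ → Option L) (M : Finset (V₁ × V₂)) : Prop :=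
  (∀ p ∈ M, ∀ q ∈ M, p ≠ q → p.1 ≠ q.1 ∧ p.2 ≠ q.2) ∧
  (∀ p ∈ M, lab₁ p.1 = lab₂ p.2) ∧
  (∀ p ∈ M, ∀ q ∈ M, ∀ r ∈ M, (T₁.IsLCA r.1 p.1 q.1 ↔ T₂.IsLCA r.2 p.2 q.2)) ∧
  (∀ p ∈ M, ∀ q ∈ M, ∀ c c', T₁.IsLCA c p.1 q.1 → T₂.IsLCA c' p.2 q.2 → (c, c') ∈ M)

open scoped Classical in
/-- `mast u v` : the maximum number of labeled nodes of an agreement subtree of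
`T₁^u` and `T₂^v`. -/
noncomputable def mast (T₁ : RTree V₁) (T₂ : RTree V₂)
    (lab₁ : V₁ → Option L) (lab₂ : V₂ → Option L) (u : V₁) (v : V₂) : ℕ :=
  ((Finset.univ : Finset (Finset (V₁ × V₂))).filter fun M =>
      M ⊆ T₁.subtree u ×ˢ T₂.subtree v ∧ AgreementPairs T₁ T₂ lab₁ lab₂ M).sup
    fun M => (M.filter fun p => lab₁ p.1 ≠ none).card

/-- A matching: a set of pairwise non-adjacent edges. -/
def IsMatching {X Y : Type*} (M : Finset (X × Y)) : Prop :=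
  ∀ e ∈ M, ∀ f ∈ M, e ≠ f → e.1 ≠ f.1 ∧ e.2 ≠ f.2

open scoped Classical in
/-- The weight `‖MWM(G_{uv})‖` of a maximum weight matching of the bipartite graph
`G_{uv}` between `C(u)` and `C(v)`, where edge `(x,y)` has weight `mast(T₁^x, T₂^y)`. -/
noncomputable def mwmG (T₁ : RTree V₁) (T₂ : RTree V₂)
    (lab₁ : V₁ → Option L) (lab₂ : V₂ → Option L) (u : V₁) (v : V₂) : ℕ :=
  ((Finset.univ : Finset (Finset (V₁ × V₂))).filter fun N =>
      N ⊆ T₁.children u ×ˢ T₂.children v ∧ IsMatching N).sup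
    fun N => ∑ p ∈ N, mast T₁ T₂ lab₁ lab₂ p.1 p.2


section MastAPI
variable (T₁ : RTree V₁) (T₂ : RTree V₂) (lab₁ : V₁ → Option L) (lab₂ : V₂ → Option L)

lemma agreementPairs_empty : AgreementPairs T₁ T₂ lab₁ lab₂ ∅ := by
  refine ⟨?_, ?_, ?_, ?_⟩ <;> simp

open scoped Classical in
lemma mast_eq_sup (u : V₁) (v : V₂) :
    mast T₁ T₂ lab₁ lab₂ u v =
      ((Finset.univ : Finset (Finset (V₁ × V₂))).filter fun M =>
        M ⊆ T₁.subtree u ×ˢ T₂.subtree v ∧ AgreementPairs T₁ T₂ lab₁ lab₂ M).sup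
      (fun M => (M.filter fun p => lab₁ p.1 ≠ none).card) := rfl

open scoped Classical in
lemma mwmG_eq_sup (u : V₁) (v : V₂) :
    mwmG T₁ T₂ lab₁ lab₂ u v =
      ((Finset.univ : Finset (Finset (V₁ × V₂))).filter fun N =>
        N ⊆ T₁.children u ×ˢ T₂.children v ∧ IsMatching N).sup
      (fun N => ∑ p ∈ N, mast T₁ T₂ lab₁ lab₂ p.1 p.2) := rfl

open scoped Classical in
lemma le_mast {u : V₁} {v : V₂} {M : Finset (V₁ × V₂)}
    (h1 : M ⊆ T₁.subtree u ×ˢ T₂.subtree v)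
    (h2 : AgreementPairs T₁ T₂ lab₁ lab₂ M) :
    (M.filter fun p => lab₁ p.1 ≠ none).card ≤ mast T₁ T₂ lab₁ lab₂ u v := by
  rw [mast_eq_sup]
  refine Finset.le_sup (f := fun M : Finset (V₁ × V₂) => (M.filter fun p => lab₁ p.1 ≠ none).card) (b := M) ?_
  rw [Finset.mem_filter]
  exact ⟨Finset.mem_univ M, h1, h2⟩

open scoped Classical in
lemma mast_le {u : V₁} {v : V₂} {n : ℕ}
    (h : ∀ M : Finset (V₁ × V₂), M ⊆ T₁.subtree u ×ˢ T₂.subtree v →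
      AgreementPairs T₁ T₂ lab₁ lab₂ M →
      (M.filter fun p => lab₁ p.1 ≠ none).card ≤ n) :
    mast T₁ T₂ lab₁ lab₂ u v ≤ n := by
  rw [mast_eq_sup]
  exact Finset.sup_le fun M hM => by
    obtain ⟨-, h1, h2⟩ := Finset.mem_filter.1 hM
    exact h M h1 h2

open scoped Classical in
lemma exists_mast (u : V₁) (v : V₂) :
    ∃ M : Finset (V₁ × V₂), M ⊆ T₁.subtree u ×ˢ T₂.subtree v ∧
      AgreementPairs T₁ T₂ lab₁ lab₂ M ∧
      (M.filter fun p => lab₁ p.1 ≠ none).card = mast T₁ T₂ lab₁ lab₂ u v := by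
  have hne : ((Finset.univ : Finset (Finset (V₁ × V₂))).filter fun M =>
      M ⊆ T₁.subtree u ×ˢ T₂.subtree v ∧
        AgreementPairs T₁ T₂ lab₁ lab₂ M).Nonempty :=
    ⟨∅, Finset.mem_filter.2 ⟨Finset.mem_univ _, by simp,
      agreementPairs_empty T₁ T₂ lab₁ lab₂⟩⟩
  obtain ⟨M, hM, hval⟩ := Finset.exists_mem_eq_sup _ hne
    (fun M : Finset (V₁ × V₂) => (M.filter fun p => lab₁ p.1 ≠ none).card)
  obtain ⟨-, h1, h2⟩ := Finset.mem_filter.1 hM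
  exact ⟨M, h1, h2, by rw [mast_eq_sup, hval]⟩

open scoped Classical in
lemma le_mwmG {u : V₁} {v : V₂} {N : Finset (V₁ × V₂)}
    (h1 : N ⊆ T₁.children u ×ˢ T₂.children v) (h2 : IsMatching N) :
    ∑ p ∈ N, mast T₁ T₂ lab₁ lab₂ p.1 p.2 ≤ mwmG T₁ T₂ lab₁ lab₂ u v := by
  rw [mwmG_eq_sup]
  refine Finset.le_sup (f := fun N : Finset (V₁ × V₂) => ∑ p ∈ N, mast T₁ T₂ lab₁ lab₂ p.1 p.2) (b := N) ?_
  rw [Finset.mem_filter]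
  exact ⟨Finset.mem_univ N, h1, h2⟩

open scoped Classical in
lemma mwmG_le {u : V₁} {v : V₂} {n : ℕ}
    (h : ∀ N : Finset (V₁ × V₂), N ⊆ T₁.children u ×ˢ T₂.children v → IsMatching N →
      ∑ p ∈ N, mast T₁ T₂ lab₁ lab₂ p.1 p.2 ≤ n) :
    mwmG T₁ T₂ lab₁ lab₂ u v ≤ n := by
  rw [mwmG_eq_sup]
  exact Finset.sup_le fun N hN => by
    obtain ⟨-, h1, h2⟩ := Finset.mem_filter.1 hN
    exact h N h1 h2

open scoped Classical in
lemma exists_mwmG (u : V₁) (v : V₂) :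
    ∃ N : Finset (V₁ × V₂), N ⊆ T₁.children u ×ˢ T₂.children v ∧ IsMatching N ∧
      ∑ p ∈ N, mast T₁ T₂ lab₁ lab₂ p.1 p.2 = mwmG T₁ T₂ lab₁ lab₂ u v := by
  have hne : ((Finset.univ : Finset (Finset (V₁ × V₂))).filter fun N =>
      N ⊆ T₁.children u ×ˢ T₂.children v ∧ IsMatching N).Nonempty :=
    ⟨∅, Finset.mem_filter.2 ⟨Finset.mem_univ _, by simp,
      fun e he => absurd he (by simp)⟩⟩
  obtain ⟨N, hN, hval⟩ := Finset.exists_mem_eq_sup _ hne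
    (fun N : Finset (V₁ × V₂) => ∑ p ∈ N, mast T₁ T₂ lab₁ lab₂ p.1 p.2)
  obtain ⟨-, h1, h2⟩ := Finset.mem_filter.1 hN
  exact ⟨N, h1, h2, by rw [mwmG_eq_sup, hval]⟩

/-- monotonicity of mast in subtree containment -/
lemma mast_mono {u u' : V₁} {v v' : V₂} (h1 : T₁.subtree u ⊆ T₁.subtree u')
    (h2 : T₂.subtree v ⊆ T₂.subtree v') :
    mast T₁ T₂ lab₁ lab₂ u v ≤ mast T₁ T₂ lab₁ lab₂ u' v' := by
  classical
  refine mast_le T₁ T₂ lab₁ lab₂ fun M hM hA => le_mast T₁ T₂ lab₁ lab₂ ?_ hA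
  exact hM.trans (Finset.product_subset_product h1 h2)

end MastAPI


section ChildOf
variable {V : Type*} [Fintype V] [DecidableEq V]

open scoped Classical in
noncomputable def RTree.childOf (T : RTree V) (u a : V) : V :=
  if h : a ∈ T.subtree u ∧ a ≠ u then (T.exists_child_subtree h.1 h.2).choose else u

lemma RTree.childOf_spec (T : RTree V) {u a : V} (h1 : a ∈ T.subtree u) (h2 : a ≠ u) :
    T.childOf u a ∈ T.children u ∧ a ∈ T.subtree (T.childOf u a) := by
  rw [RTree.childOf, dif_pos ⟨h1, h2⟩]
  obtain ⟨hx, hmem⟩ := (T.exists_child_subtree h1 h2).choose_spec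
  exact ⟨hx, hmem⟩

lemma RTree.childOf_eq (T : RTree V) {u x a : V} (hx : x ∈ T.children u)
    (ha : a ∈ T.subtree x) : T.childOf u a = x := by
  have hne : a ≠ u := fun h => T.not_mem_subtree_child hx (h ▸ ha)
  obtain ⟨hc, hmem⟩ := T.childOf_spec (T.subtree_child_subset hx ha) hne
  by_contra h
  exact Finset.disjoint_left.1 (T.disjoint_child_subtrees hc hx h) hmem ha

/-- uniqueness form of IsLCA -/
lemma RTree.isLCA_iff (T : RTree V) {c a b : V} (h : T.IsLCA c a b) (c' : V) :
    T.IsLCA c' a b ↔ c' = c :=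
  ⟨fun h' => T.lca_unique h' h, fun h' => h' ▸ h⟩

end ChildOf

section LowerC
variable (T₁ : RTree V₁) (T₂ : RTree V₂) (lab₁ : V₁ → Option L) (lab₂ : V₂ → Option L)

open scoped Classical in
lemma mwmG_le_mast {u : V₁} {v : V₂} (hlab : lab₁ u = lab₂ v) :
    mwmG T₁ T₂ lab₁ lab₂ u v + (if lab₁ u ≠ none then 1 else 0) ≤
      mast T₁ T₂ lab₁ lab₂ u v := by
  obtain ⟨N, hNsub, hNmatch, hNsum⟩ := exists_mwmG T₁ T₂ lab₁ lab₂ u v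
  choose F hF1 hF2 hF3 using fun e : V₁ × V₂ => exists_mast T₁ T₂ lab₁ lab₂ e.1 e.2
  -- basic facts about edges
  have hNc : ∀ e ∈ N, e.1 ∈ T₁.children u ∧ e.2 ∈ T₂.children v := by
    intro e he
    exact Finset.mem_product.1 (hNsub he)
  -- elements of F e live in the child subtrees
  have hFsub : ∀ e ∈ N, ∀ p ∈ F e, p.1 ∈ T₁.subtree e.1 ∧ p.2 ∈ T₂.subtree e.2 := by
    intro e _ p hp
    exact Finset.mem_product.1 (hF1 e hp)
  set B := N.biUnion F with hB
  -- unique edge containing a given element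
  have huniq : ∀ p ∈ B, ∀ e ∈ N, ∀ f ∈ N, p ∈ F e → p ∈ F f → e = f := by
    intro p _ e he f hf hpe hpf
    by_contra hne
    obtain ⟨h1, _⟩ := hNmatch e he f hf hne
    exact Finset.disjoint_left.1
      (T₁.disjoint_child_subtrees (hNc e he).1 (hNc f hf).1 h1)
      (hFsub e he p hpe).1 (hFsub f hf p hpf).1
  have hBmem : ∀ p ∈ B, ∃ e ∈ N, p ∈ F e := fun p hp => by
    simpa using Finset.mem_biUnion.1 hp
  have hBufst : ∀ p ∈ B, p.1 ≠ u ∧ p.2 ≠ v := by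
    intro p hp
    obtain ⟨e, he, hpe⟩ := hBmem p hp
    constructor
    · intro h
      exact T₁.not_mem_subtree_child (hNc e he).1 (h ▸ (hFsub e he p hpe).1)
    · intro h
      exact T₂.not_mem_subtree_child (hNc e he).2 (h ▸ (hFsub e he p hpe).2)
  have huvB : (u, v) ∉ B := fun h => (hBufst _ h).1 rfl
  set M₀ : Finset (V₁ × V₂) := insert (u, v) B with hM₀
  -- characterization of membership in M₀
  have hM₀mem : ∀ p ∈ M₀, p = (u, v) ∨ ∃ e ∈ N, p ∈ F e := by
    intro p hp
    rcases Finset.mem_insert.1 hp with h | h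
    · exact Or.inl h
    · exact Or.inr (hBmem p h)
  -- LCA facts
  have hLCA1 : ∀ p ∈ M₀, p.1 ∈ T₁.subtree u ∧ p.2 ∈ T₂.subtree v := by
    intro p hp
    rcases hM₀mem p hp with h | ⟨e, he, hpe⟩
    · exact h ▸ ⟨T₁.mem_subtree_self u, T₂.mem_subtree_self v⟩
    · exact ⟨T₁.subtree_child_subset (hNc e he).1 (hFsub e he p hpe).1,
        T₂.subtree_child_subset (hNc e he).2 (hFsub e he p hpe).2⟩
  -- for elements of M₀, first coord = u iff p = (u,v)
  have hcoord : ∀ p ∈ M₀, (p.1 = u ↔ p = (u, v)) ∧ (p.2 = v ↔ p = (u, v)) := by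
    intro p hp
    rcases hM₀mem p hp with h | ⟨e, he, hpe⟩
    · subst h; simp
    · have := hBufst p (Finset.mem_biUnion.2 ⟨e, he, hpe⟩)
      constructor
      · exact ⟨fun h => absurd h this.1, fun h => by rw [h]⟩
      · exact ⟨fun h => absurd h this.2, fun h => by rw [h]⟩
  have hdisjF : ∀ e ∈ N, ∀ f ∈ N, e ≠ f → Disjoint (F e) (F f) := by
    intro e he f hf hne
    rw [Finset.disjoint_left]
    intro p hpe hpf
    exact hne (huniq p (Finset.mem_biUnion.2 ⟨e, he, hpe⟩) e he f hf hpe hpf)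
  have hlcaU : ∀ e ∈ N, ∀ f ∈ N, e ≠ f → ∀ p ∈ F e, ∀ q ∈ F f,
      T₁.IsLCA u p.1 q.1 ∧ T₂.IsLCA v p.2 q.2 := by
    intro e he f hf hne p hpe q hqf
    obtain ⟨h1, h2⟩ := hNmatch e he f hf hne
    exact ⟨T₁.isLCA_of_ne_children (hNc e he).1 (hNc f hf).1 h1
        (hFsub e he p hpe).1 (hFsub f hf q hqf).1,
      T₂.isLCA_of_ne_children (hNc e he).2 (hNc f hf).2 h2
        (hFsub e he p hpe).2 (hFsub f hf q hqf).2⟩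
  -- key claim
  have key : ∀ p ∈ M₀, ∀ q ∈ M₀, ∃ c c', T₁.IsLCA c p.1 q.1 ∧ T₂.IsLCA c' p.2 q.2 ∧
      (c, c') ∈ M₀ ∧ ∀ r ∈ M₀, (r.1 = c ↔ r.2 = c') := by
    intro p hp q hq
    rcases hM₀mem p hp with hpuv | ⟨e, he, hpe⟩
    · subst hpuv
      refine ⟨u, v, T₁.isLCA_self_left (T₁.mem_subtree.1 (hLCA1 q hq).1),
        T₂.isLCA_self_left (T₂.mem_subtree.1 (hLCA1 q hq).2),
        Finset.mem_insert_self _ _, fun r hr => ?_⟩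
      rw [(hcoord r hr).1, (hcoord r hr).2]
    · rcases hM₀mem q hq with hquv | ⟨f, hf, hqf⟩
      · subst hquv
        refine ⟨u, v, T₁.isLCA_self_right (T₁.mem_subtree.1 (hLCA1 p hp).1),
          T₂.isLCA_self_right (T₂.mem_subtree.1 (hLCA1 p hp).2),
          Finset.mem_insert_self _ _, fun r hr => ?_⟩
        rw [(hcoord r hr).1, (hcoord r hr).2]
      · by_cases hef : e = f
        · subst hef
          obtain ⟨c, hc⟩ := T₁.lca_exists p.1 q.1
          obtain ⟨c', hc'⟩ := T₂.lca_exists p.2 q.2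
          have hccF : (c, c') ∈ F e := (hF2 e).2.2.2 p hpe q hqf c c' hc hc'
          have hcsub : c ∈ T₁.subtree e.1 :=
            T₁.lca_mem_subtree (hFsub e he p hpe).1 (hFsub e he q hqf).1 hc
          have hcsub' : c' ∈ T₂.subtree e.2 :=
            T₂.lca_mem_subtree (hFsub e he p hpe).2 (hFsub e he q hqf).2 hc'
          refine ⟨c, c', hc, hc', Finset.mem_insert_of_mem
            (Finset.mem_biUnion.2 ⟨e, he, hccF⟩), fun r hr => ?_⟩
          rcases hM₀mem r hr with hruv | ⟨g, hg, hrg⟩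
          · subst hruv
            constructor
            · intro h
              rw [← h] at hcsub
              exact absurd hcsub (T₁.not_mem_subtree_child (hNc e he).1)
            · intro h
              rw [← h] at hcsub'
              exact absurd hcsub' (T₂.not_mem_subtree_child (hNc e he).2)
          · by_cases hge : g = e
            · subst hge
              constructor
              · intro h
                by_cases hr' : r = (c, c')
                · rw [hr']
                · exact absurd h ((hF2 g).1 r hrg (c, c') hccF hr').1
              · intro h
                by_cases hr' : r = (c, c')
                · rw [hr']
                · exact absurd h ((hF2 g).1 r hrg (c, c') hccF hr').2
            · obtain ⟨h1, h2⟩ := hNmatch g hg e he hge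
              have d1 := T₁.disjoint_child_subtrees (hNc g hg).1 (hNc e he).1 h1
              have d2 := T₂.disjoint_child_subtrees (hNc g hg).2 (hNc e he).2 h2
              constructor
              · intro h
                exact absurd (h ▸ (hFsub g hg r hrg).1)
                  (Finset.disjoint_right.1 d1 hcsub)
              · intro h
                exact absurd (h ▸ (hFsub g hg r hrg).2)
                  (Finset.disjoint_right.1 d2 hcsub')
        · obtain ⟨hL1, hL2⟩ := hlcaU e he f hf hef p hpe q hqf
          refine ⟨u, v, hL1, hL2, Finset.mem_insert_self _ _, fun r hr => ?_⟩
          rw [(hcoord r hr).1, (hcoord r hr).2]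
  -- M₀ is an agreement set
  have hAgr : AgreementPairs T₁ T₂ lab₁ lab₂ M₀ := by
    refine ⟨?_, ?_, ?_, ?_⟩
    · intro p hp q hq hne
      rcases hM₀mem p hp with hpuv | ⟨e, he, hpe⟩
      · rcases hM₀mem q hq with hquv | ⟨f, hf, hqf⟩
        · exact absurd (hpuv.trans hquv.symm) hne
        · have := hBufst q (Finset.mem_biUnion.2 ⟨f, hf, hqf⟩)
          subst hpuv
          exact ⟨Ne.symm this.1, Ne.symm this.2⟩
      · rcases hM₀mem q hq with hquv | ⟨f, hf, hqf⟩
        · have := hBufst p (Finset.mem_biUnion.2 ⟨e, he, hpe⟩)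
          subst hquv
          exact ⟨this.1, this.2⟩
        · by_cases hef : e = f
          · subst hef
            exact (hF2 e).1 p hpe q hqf hne
          · obtain ⟨h1, h2⟩ := hNmatch e he f hf hef
            refine ⟨fun h => ?_, fun h => ?_⟩
            · exact Finset.disjoint_left.1
                (T₁.disjoint_child_subtrees (hNc e he).1 (hNc f hf).1 h1)
                (hFsub e he p hpe).1 (h ▸ (hFsub f hf q hqf).1)
            · exact Finset.disjoint_left.1
                (T₂.disjoint_child_subtrees (hNc e he).2 (hNc f hf).2 h2)
                (hFsub e he p hpe).2 (h ▸ (hFsub f hf q hqf).2)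
    · intro p hp
      rcases hM₀mem p hp with hpuv | ⟨e, _, hpe⟩
      · rw [hpuv]; exact hlab
      · exact (hF2 e).2.1 p hpe
    · intro p hp q hq r hr
      obtain ⟨c, c', hc, hc', _, hiff⟩ := key p hp q hq
      rw [T₁.isLCA_iff hc, T₂.isLCA_iff hc', hiff r hr]
    · intro p hp q hq c₀ c₀' h₁ h₂
      obtain ⟨c, c', hc, hc', hmem, _⟩ := key p hp q hq
      rwa [T₁.lca_unique h₁ hc, T₂.lca_unique h₂ hc']
  -- feasibility
  have hsub : M₀ ⊆ T₁.subtree u ×ˢ T₂.subtree v := fun p hp =>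
    Finset.mem_product.2 (hLCA1 p hp)
  -- counting
  have hcount : (M₀.filter fun p => lab₁ p.1 ≠ none).card =
      (∑ e ∈ N, mast T₁ T₂ lab₁ lab₂ e.1 e.2) + (if lab₁ u ≠ none then 1 else 0) := by
    have hBcard : (B.filter fun p => lab₁ p.1 ≠ none).card =
        ∑ e ∈ N, mast T₁ T₂ lab₁ lab₂ e.1 e.2 := by
      rw [hB, Finset.filter_biUnion, Finset.card_biUnion]
      · exact Finset.sum_congr rfl fun e he => hF3 e
      · intro e he f hf hne
        exact Finset.disjoint_filter_filter (hdisjF e he f hf hne)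
    rw [hM₀, Finset.filter_insert]
    by_cases hP : lab₁ (u, v).1 ≠ none
    · rw [if_pos hP, Finset.card_insert_of_notMem
        (fun h => huvB (Finset.mem_of_mem_filter _ h)), hBcard, if_pos hP]
    · rw [if_neg hP, hBcard, if_neg hP, Nat.add_zero]
  calc mwmG T₁ T₂ lab₁ lab₂ u v + (if lab₁ u ≠ none then 1 else 0)
      = (M₀.filter fun p => lab₁ p.1 ≠ none).card := by rw [hcount, hNsum]
    _ ≤ mast T₁ T₂ lab₁ lab₂ u v := le_mast T₁ T₂ lab₁ lab₂ hsub hAgr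

end LowerC


section UpperBound
variable (T₁ : RTree V₁) (T₂ : RTree V₂) (lab₁ : V₁ → Option L) (lab₂ : V₂ → Option L)

open scoped Classical in
lemma mast_le_recurrence (u : V₁) (v : V₂) :
    mast T₁ T₂ lab₁ lab₂ u v ≤
      max ((T₂.children v).sup fun x => mast T₁ T₂ lab₁ lab₂ u x)
        (max ((T₁.children u).sup fun x => mast T₁ T₂ lab₁ lab₂ x v)
          (if lab₁ u = none ∧ lab₂ v = none then mwmG T₁ T₂ lab₁ lab₂ u v
           else if lab₁ u = lab₂ v ∧ lab₁ u ≠ none then mwmG T₁ T₂ lab₁ lab₂ u v + 1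
           else 0)) := by
  refine mast_le T₁ T₂ lab₁ lab₂ fun M hMsub hAgr => ?_
  obtain ⟨hinj, hlabM, hlca3, hlca4⟩ := hAgr
  have hsubM : ∀ p ∈ M, p.1 ∈ T₁.subtree u ∧ p.2 ∈ T₂.subtree v := fun p hp =>
    Finset.mem_product.1 (hMsub hp)
  by_cases hA : ∃ x ∈ T₂.children v, ∀ p ∈ M, p.2 ∈ T₂.subtree x
  · obtain ⟨x, hx, hall⟩ := hA
    have h1 : (M.filter fun p => lab₁ p.1 ≠ none).card ≤ mast T₁ T₂ lab₁ lab₂ u x := by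
      refine le_mast T₁ T₂ lab₁ lab₂ (fun p hp => Finset.mem_product.2
        ⟨(hsubM p hp).1, hall p hp⟩) ⟨hinj, hlabM, hlca3, hlca4⟩
    exact le_trans (h1.trans (Finset.le_sup hx)) (le_max_left _ _)
  by_cases hBc : ∃ x ∈ T₁.children u, ∀ p ∈ M, p.1 ∈ T₁.subtree x
  · obtain ⟨x, hx, hall⟩ := hBc
    have h1 : (M.filter fun p => lab₁ p.1 ≠ none).card ≤ mast T₁ T₂ lab₁ lab₂ x v := by
      refine le_mast T₁ T₂ lab₁ lab₂ (fun p hp => Finset.mem_product.2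
        ⟨hall p hp, (hsubM p hp).2⟩) ⟨hinj, hlabM, hlca3, hlca4⟩
    exact le_trans (h1.trans (Finset.le_sup (f := fun x => mast T₁ T₂ lab₁ lab₂ x v) hx))
      (le_trans (le_max_left _ _) (le_max_right _ _))
  -- Case C : neither side collapses into a single child subtree
  -- (C1) pairing with the root
  have huv1 : ∀ a, (a, v) ∈ M → a = u := by
    intro a hav
    have hanc : ∀ q ∈ M, T₁.anc a q.1 := by
      intro q hq
      obtain ⟨c, hc⟩ := T₁.lca_exists a q.1
      have hv : T₂.IsLCA v v q.2 :=
        T₂.isLCA_self_left (T₂.mem_subtree.1 (hsubM q hq).2)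
      have hmem : (c, v) ∈ M := hlca4 (a, v) hav q hq c v hc hv
      have hca : c = a := by
        by_contra hne'
        exact (hinj (c, v) hmem (a, v) hav (fun h => hne' (congrArg Prod.fst h))).2 rfl
      rw [← hca]
      exact hc.2.1
    by_contra hne
    obtain ⟨x, hx, hax⟩ := T₁.exists_child_subtree (hsubM (a, v) hav).1 hne
    exact hBc ⟨x, hx, fun q hq => T₁.mem_subtree.2
      (T₁.anc_trans (T₁.mem_subtree.1 hax) (hanc q hq))⟩
  have huv2 : ∀ b, (u, b) ∈ M → b = v := by
    intro b hub
    have hanc : ∀ q ∈ M, T₂.anc b q.2 := by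
      intro q hq
      obtain ⟨c, hc⟩ := T₂.lca_exists b q.2
      have hu : T₁.IsLCA u u q.1 :=
        T₁.isLCA_self_left (T₁.mem_subtree.1 (hsubM q hq).1)
      have hmem : (u, c) ∈ M := hlca4 (u, b) hub q hq u c hu hc
      have hcb : c = b := by
        by_contra hne'
        exact (hinj (u, c) hmem (u, b) hub (fun h => hne' (congrArg Prod.snd h))).1 rfl
      rw [← hcb]
      exact hc.2.1
    by_contra hne
    obtain ⟨y, hy, hby⟩ := T₂.exists_child_subtree (hsubM (u, b) hub).2 hne
    exact hA ⟨y, hy, fun q hq => T₂.mem_subtree.2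
      (T₂.anc_trans (T₂.mem_subtree.1 hby) (hanc q hq))⟩
  -- (C2) non-root pairs avoid the roots
  have hne' : ∀ p ∈ M, p ≠ (u, v) → p.1 ≠ u ∧ p.2 ≠ v := by
    intro p hp hne
    constructor
    · intro h
      refine hne (Prod.ext h (huv2 p.2 ?_))
      rwa [← h]
    · intro h
      refine hne (Prod.ext (huv1 p.1 ?_) h)
      rwa [← h]
  -- (C3) child assignments
  have hX : ∀ p ∈ M, p ≠ (u, v) →
      T₁.childOf u p.1 ∈ T₁.children u ∧ p.1 ∈ T₁.subtree (T₁.childOf u p.1) :=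
    fun p hp hne => T₁.childOf_spec (hsubM p hp).1 (hne' p hp hne).1
  have hY : ∀ p ∈ M, p ≠ (u, v) →
      T₂.childOf v p.2 ∈ T₂.children v ∧ p.2 ∈ T₂.subtree (T₂.childOf v p.2) :=
    fun p hp hne => T₂.childOf_spec (hsubM p hp).2 (hne' p hp hne).2
  -- (C4) consistency of the child assignment across the two trees
  have hcross : ∀ p ∈ M, ∀ q ∈ M, p ≠ (u, v) → q ≠ (u, v) →
      (T₁.childOf u p.1 = T₁.childOf u q.1 ↔ T₂.childOf v p.2 = T₂.childOf v q.2) := by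
    intro p hp q hq hpne hqne
    constructor
    · intro hXeq
      by_contra hYne
      have hvlca : T₂.IsLCA v p.2 q.2 :=
        T₂.isLCA_of_ne_children (hY p hp hpne).1 (hY q hq hqne).1 hYne
          (hY p hp hpne).2 (hY q hq hqne).2
      obtain ⟨c, hc⟩ := T₁.lca_exists p.1 q.1
      have hmem : (c, v) ∈ M := hlca4 p hp q hq c v hc hvlca
      have hcu : c = u := huv1 c hmem
      have hcx : c ∈ T₁.subtree (T₁.childOf u p.1) :=
        T₁.lca_mem_subtree (hX p hp hpne).2 (hXeq ▸ (hX q hq hqne).2) hc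
      rw [hcu] at hcx
      exact T₁.not_mem_subtree_child (hX p hp hpne).1 hcx
    · intro hYeq
      by_contra hXne
      have hulca : T₁.IsLCA u p.1 q.1 :=
        T₁.isLCA_of_ne_children (hX p hp hpne).1 (hX q hq hqne).1 hXne
          (hX p hp hpne).2 (hX q hq hqne).2
      obtain ⟨c, hc⟩ := T₂.lca_exists p.2 q.2
      have hmem : (u, c) ∈ M := hlca4 p hp q hq u c hulca hc
      have hcv : c = v := huv2 c hmem
      have hcy : c ∈ T₂.subtree (T₂.childOf v p.2) :=
        T₂.lca_mem_subtree (hY p hp hpne).2 (hYeq ▸ (hY q hq hqne).2) hc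
      rw [hcv] at hcy
      exact T₂.not_mem_subtree_child (hY p hp hpne).1 hcy
  -- (C5) two different children force the root pair into M
  have hforce : ∀ p ∈ M, ∀ q ∈ M, p ≠ (u, v) → q ≠ (u, v) →
      T₁.childOf u p.1 ≠ T₁.childOf u q.1 → (u, v) ∈ M := by
    intro p hp q hq hpne hqne hXne
    have hYne : T₂.childOf v p.2 ≠ T₂.childOf v q.2 :=
      fun h => hXne ((hcross p hp q hq hpne hqne).2 h)
    exact hlca4 p hp q hq u v
      (T₁.isLCA_of_ne_children (hX p hp hpne).1 (hX q hq hqne).1 hXne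
        (hX p hp hpne).2 (hX q hq hqne).2)
      (T₂.isLCA_of_ne_children (hY p hp hpne).1 (hY q hq hqne).1 hYne
        (hY p hp hpne).2 (hY q hq hqne).2)
  -- (C6) the main matching bound on M minus the root pair
  have hMain : ((M.erase (u, v)).filter fun p => lab₁ p.1 ≠ none).card ≤
      mwmG T₁ T₂ lab₁ lab₂ u v := by
    set M' := M.erase (u, v) with hM'
    have hM'mem : ∀ p ∈ M', p ∈ M ∧ p ≠ (u, v) := fun p hp =>
      ⟨Finset.mem_of_mem_erase hp, Finset.ne_of_mem_erase hp⟩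
    set g : V₁ × V₂ → V₁ × V₂ := fun p => (T₁.childOf u p.1, T₂.childOf v p.2) with hg
    set N := M'.image g with hN
    have hNsub : N ⊆ T₁.children u ×ˢ T₂.children v := by
      intro e he
      obtain ⟨p, hp, rfl⟩ := Finset.mem_image.1 he
      exact Finset.mem_product.2 ⟨(hX p (hM'mem p hp).1 (hM'mem p hp).2).1,
        (hY p (hM'mem p hp).1 (hM'mem p hp).2).1⟩
    have hNmatch : IsMatching N := by
      intro e he f hf hef
      obtain ⟨p, hp, rfl⟩ := Finset.mem_image.1 he
      obtain ⟨q, hq, rfl⟩ := Finset.mem_image.1 hf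
      have h1 : T₁.childOf u p.1 ≠ T₁.childOf u q.1 := by
        intro h
        exact hef (Prod.ext h ((hcross p (hM'mem p hp).1 q (hM'mem q hq).1
          (hM'mem p hp).2 (hM'mem q hq).2).1 h))
      refine ⟨h1, fun h => h1 ((hcross p (hM'mem p hp).1 q (hM'mem q hq).1
        (hM'mem p hp).2 (hM'mem q hq).2).2 h)⟩
    -- per-edge agreement sets
    have hedge : ∀ e ∈ N, ((M'.filter fun p => g p = e).filter
        fun p => lab₁ p.1 ≠ none).card ≤ mast T₁ T₂ lab₁ lab₂ e.1 e.2 := by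
      intro e he
      have hec := Finset.mem_product.1 (hNsub he)
      have hmemE : ∀ p ∈ M'.filter fun p => g p = e,
          p ∈ M ∧ p ≠ (u, v) ∧ p.1 ∈ T₁.subtree e.1 ∧ p.2 ∈ T₂.subtree e.2 := by
        intro p hp
        obtain ⟨hp', hpe⟩ := Finset.mem_filter.1 hp
        obtain ⟨hpM, hpne⟩ := hM'mem p hp'
        refine ⟨hpM, hpne, ?_, ?_⟩
        · rw [← congrArg Prod.fst hpe]
          exact (hX p hpM hpne).2
        · rw [← congrArg Prod.snd hpe]
          exact (hY p hpM hpne).2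
      refine le_mast T₁ T₂ lab₁ lab₂ (fun p hp => Finset.mem_product.2
        ⟨(hmemE p hp).2.2.1, (hmemE p hp).2.2.2⟩) ?_
      refine ⟨fun p hp q hq hne => hinj p (hmemE p hp).1 q (hmemE q hq).1 hne,
        fun p hp => hlabM p (hmemE p hp).1,
        fun p hp q hq r hr => hlca3 p (hmemE p hp).1 q (hmemE q hq).1 r (hmemE r hr).1,
        ?_⟩
      intro p hp q hq c c' h₁ h₂
      have hcM : (c, c') ∈ M :=
        hlca4 p (hmemE p hp).1 q (hmemE q hq).1 c c' h₁ h₂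
      have hcsub : c ∈ T₁.subtree e.1 :=
        T₁.lca_mem_subtree (hmemE p hp).2.2.1 (hmemE q hq).2.2.1 h₁
      have hcsub' : c' ∈ T₂.subtree e.2 :=
        T₂.lca_mem_subtree (hmemE p hp).2.2.2 (hmemE q hq).2.2.2 h₂
      have hcne : (c, c') ≠ (u, v) := by
        intro h
        injection h with h1 h2
        rw [h1] at hcsub
        exact T₁.not_mem_subtree_child hec.1 hcsub
      refine Finset.mem_filter.2 ⟨Finset.mem_erase.2 ⟨hcne, hcM⟩, ?_⟩
      have e1 : T₁.childOf u c = e.1 := T₁.childOf_eq hec.1 hcsub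
      have e2 : T₂.childOf v c' = e.2 := T₂.childOf_eq hec.2 hcsub'
      rw [hg]
      exact Prod.ext e1 e2
    -- decompose the count over the fibers of g
    calc (M'.filter fun p => lab₁ p.1 ≠ none).card
        = ∑ e ∈ (M'.filter fun p => lab₁ p.1 ≠ none).image g,
            ((M'.filter fun p => lab₁ p.1 ≠ none).filter fun p => g p = e).card :=
          Finset.card_eq_sum_card_image _ _
      _ ≤ ∑ e ∈ N, ((M'.filter fun p => lab₁ p.1 ≠ none).filter fun p => g p = e).card := by
          refine Finset.sum_le_sum_of_subset ?_
          exact Finset.image_subset_image (Finset.filter_subset _ _)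
      _ ≤ ∑ e ∈ N, mast T₁ T₂ lab₁ lab₂ e.1 e.2 := by
          refine Finset.sum_le_sum fun e he => ?_
          have : (M'.filter fun p => lab₁ p.1 ≠ none).filter (fun p => g p = e) =
              (M'.filter fun p => g p = e).filter fun p => lab₁ p.1 ≠ none := by
            rw [Finset.filter_filter, Finset.filter_filter]
            exact Finset.filter_congr fun p _ => by tauto
          rw [this]
          exact hedge e he
      _ ≤ mwmG T₁ T₂ lab₁ lab₂ u v := le_mwmG T₁ T₂ lab₁ lab₂ hNsub hNmatch
  -- final assembly
  by_cases huvM : (u, v) ∈ M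
  · have hLuv : lab₁ u = lab₂ v := hlabM (u, v) huvM
    by_cases hnone : lab₁ u = none
    · -- both unlabeled; count M = count M'
      have hEq : (M.filter fun p => lab₁ p.1 ≠ none) =
          ((M.erase (u, v)).filter fun p => lab₁ p.1 ≠ none) := by
        apply Finset.Subset.antisymm
        · intro p hp
          obtain ⟨hpM, hpl⟩ := Finset.mem_filter.1 hp
          refine Finset.mem_filter.2 ⟨Finset.mem_erase.2 ⟨?_, hpM⟩, hpl⟩
          intro h
          rw [congrArg Prod.fst h] at hpl
          exact hpl hnone
        · exact Finset.filter_subset_filter _ (Finset.erase_subset _ _)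
      rw [hEq]
      refine le_trans hMain (le_trans ?_ (le_max_right _ _))
      refine le_trans ?_ (le_max_right _ _)
      rw [if_pos ⟨hnone, hLuv ▸ hnone⟩]
    · -- both carry the same label
      have hle : (M.filter fun p => lab₁ p.1 ≠ none).card ≤
          ((M.erase (u, v)).filter fun p => lab₁ p.1 ≠ none).card + 1 := by
        have hsub2 : (M.filter fun p => lab₁ p.1 ≠ none) ⊆
            insert (u, v) ((M.erase (u, v)).filter fun p => lab₁ p.1 ≠ none) := by
          intro p hp
          obtain ⟨hpM, hpl⟩ := Finset.mem_filter.1 hp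
          by_cases h : p = (u, v)
          · exact h ▸ Finset.mem_insert_self _ _
          · exact Finset.mem_insert_of_mem
              (Finset.mem_filter.2 ⟨Finset.mem_erase.2 ⟨h, hpM⟩, hpl⟩)
        exact le_trans (Finset.card_le_card hsub2) (Finset.card_insert_le _ _)
      refine le_trans hle (le_trans ?_ (le_max_right _ _))
      refine le_trans ?_ (le_max_right _ _)
      rw [if_neg (fun h => hnone h.1), if_pos ⟨hLuv, hnone⟩]
      exact Nat.add_le_add_right hMain 1
  · -- the root pair is absent
    have hEq : M.erase (u, v) = M := Finset.erase_eq_of_notMem huvM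
    rcases M.eq_empty_or_nonempty with hMe | ⟨p₀, hp₀⟩
    · subst hMe
      simp
    · -- all of M lies in a single child subtree of u : contradiction with hBc
      exfalso
      have hp₀ne : p₀ ≠ (u, v) := fun h => huvM (h ▸ hp₀)
      refine hBc ⟨T₁.childOf u p₀.1, (hX p₀ hp₀ hp₀ne).1, fun q hq => ?_⟩
      have hqne : q ≠ (u, v) := fun h => huvM (h ▸ hq)
      by_cases h : T₁.childOf u q.1 = T₁.childOf u p₀.1
      · rw [← h]
        exact (hX q hq hqne).2
      · exact absurd (hforce q hq p₀ hp₀ hqne hp₀ne h) huvM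

end UpperBound

open scoped Classical in
/-- The MAST recurrence: `mast(T₁^u, T₂^v)` is the maximum of
(a) `max_{x ∈ C(v)} mast(T₁^u, T₂^x)`, (b) `max_{x ∈ C(u)} mast(T₁^x, T₂^v)`, and
(c) `‖MWM(G_{uv})‖` if `u, v` are both unlabeled, `‖MWM(G_{uv})‖ + 1` if `u, v` carry
the same label (option (c) being unavailable otherwise). -/
theorem mast_recurrence (T₁ : RTree V₁) (T₂ : RTree V₂)
    (lab₁ : V₁ → Option L) (lab₂ : V₂ → Option L) (u : V₁) (v : V₂) :
    mast T₁ T₂ lab₁ lab₂ u v =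
      max ((T₂.children v).sup fun x => mast T₁ T₂ lab₁ lab₂ u x)
        (max ((T₁.children u).sup fun x => mast T₁ T₂ lab₁ lab₂ x v)
          (if lab₁ u = none ∧ lab₂ v = none then mwmG T₁ T₂ lab₁ lab₂ u v
           else if lab₁ u = lab₂ v ∧ lab₁ u ≠ none then mwmG T₁ T₂ lab₁ lab₂ u v + 1
           else 0)) := by
  exact le_antisymm (mast_le_recurrence T₁ T₂ lab₁ lab₂ u v) <| by
    refine max_le ?_ (max_le ?_ ?_)
    · refine Finset.sup_le fun x hx => ?_
      exact mast_mono T₁ T₂ lab₁ lab₂ (Finset.Subset.refl _) (T₂.subtree_child_subset hx)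
    · refine Finset.sup_le fun x hx => ?_
      exact mast_mono T₁ T₂ lab₁ lab₂ (T₁.subtree_child_subset hx) (Finset.Subset.refl _)
    · split_ifs with h1 h2
      · have h := mwmG_le_mast T₁ T₂ lab₁ lab₂ (u := u) (v := v) (h1.1.trans h1.2.symm)
        simpa [h1.1] using h
      · have h := mwmG_le_mast T₁ T₂ lab₁ lab₂ (u := u) (v := v) h2.1
        simpa [h2.2] using h
      · exact Nat.zero_le _
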